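/- If H ⊂ 𝓗 is a cyclic closed real subspace (H + iH dense in 𝓗), then the Fock vacuum Ω is cyclic for the polynomial algebra generated by the twisted field operators φ_{L,T}(h), h ∈ H: for every n, the closure of {QΩ : Q a polynomial of degree ≤ n in the fields} contains ⊕_{k=0}^n H_{T,k}. -/

import Mathlib

/-!
STATEMENT 19: If `H ⊂ 𝓗` is a cyclic closed real subspace (`H + iH` dense),
then the Fock vacuum `Ω` is cyclic for the polynomial algebra generated by the
twisted fields `φ_{L,T}(h)`, `h ∈ H`: for every `n`, the closure of
`{QΩ : Q polynomial of degree ≤ n in the fields}` contains `⊕_{k=0}^n H_{T,k}`.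

Setting: `V k` are the twisted `k`-particle spaces `H_{T,k}`, isometrically
embedded in the twisted Fock space `𝓕` by `en k`, with mutually orthogonal
ranges; `Ω = en 0 vac`; `tens k ξ v = [ξ ⊗ v]` is the (continuous, bilinear)
twisted tensor multiplication, whose iterates on arbitrary one-particle
vectors are total in each `V k` (`htotal`); the field `φ h` applied to a
`k`-particle vector is `[h ⊗ ·]` plus terms of particle number `≤ k`
(`hφ_action`), reflecting `[φ(h₁)⋯φ(h_k)Ω]_k = [h₁⊗…⊗h_k]`.  The space of
vectors `QΩ` with `Q` a field polynomial of degree `≤ n` is `polyVac n`.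
-/

noncomputable section

/-- the iterated elementary tensors `ξ₁ ⊗ ⋯ ⊗ ξ_k ∈ V k` with factors from `S`. -/
def elemTens {𝓗 : Type*} {V : ℕ → Type*} (vac : V 0)
    (tens : ∀ k, 𝓗 → V k → V (k + 1)) (S : Set 𝓗) : ∀ k, Set (V k)
  | 0 => {vac}
  | k + 1 => {w | ∃ ξ ∈ S, ∃ v ∈ elemTens vac tens S k, w = tens k ξ v}

/-- vectors `QΩ`, `Q` a polynomial of degree `≤ n` in the fields `φ h`, `h ∈ H`. -/
def polyVac {𝓗 𝓕 : Type*} [NormedAddCommGroup 𝓗] [InnerProductSpace ℂ 𝓗]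
    [NormedAddCommGroup 𝓕] [InnerProductSpace ℂ 𝓕]
    (H : Submodule ℝ 𝓗) (φ : 𝓗 → 𝓕 → 𝓕) (Ω : 𝓕) : ℕ → Submodule ℂ 𝓕
  | 0 => Submodule.span ℂ {Ω}
  | n + 1 => polyVac H φ Ω n ⊔
      Submodule.span ℂ {w | ∃ h ∈ H, ∃ x ∈ polyVac H φ Ω n, w = φ h x}

/-- If a continuous linear map sends a set `s` into a closed submodule `N`, then it
sends the closure of the span of `s` into `N`. -/
lemma aux_maps_closure {E F : Type*} [NormedAddCommGroup E] [NormedSpace ℂ E]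
    [NormedAddCommGroup F] [NormedSpace ℂ F]
    (f : E →ₗ[ℂ] F) (hf : Continuous f) (s : Set E) (N : Submodule ℂ F)
    (hN : IsClosed (N : Set F)) (hs : ∀ x ∈ s, f x ∈ N) {x : E}
    (hx : x ∈ closure ((Submodule.span ℂ s : Submodule ℂ E) : Set E)) : f x ∈ N := by
  have h0 : Submodule.span ℂ s ≤ N.comap f := Submodule.span_le.2 hs
  have h1 : ((Submodule.span ℂ s : Submodule ℂ E) : Set E) ⊆ f ⁻¹' (N : Set F) :=
    fun y hy => h0 hy
  exact closure_minimal h1 (hN.preimage hf) hx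

/-- Induction principle for membership in `⨆ j ∈ Finset.range k, P j`. -/
lemma aux_biSup_induction {M : Type*} [AddCommGroup M] [Module ℂ M]
    (P : ℕ → Submodule ℂ M) (k : ℕ) {C : M → Prop} {x : M}
    (hx : x ∈ ⨆ j ∈ Finset.range k, P j)
    (hp : ∀ j < k, ∀ y ∈ P j, C y) (h0 : C 0)
    (hadd : ∀ y z, C y → C z → C (y + z)) : C x := by
  refine Submodule.iSup_induction (motive := C) (fun j => ⨆ _ : j ∈ Finset.range k, P j) hx
    (fun j y hy => ?_) h0 hadd
  exact Submodule.iSup_induction (motive := C) (fun _ : j ∈ Finset.range k => P j) hy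
    (fun hj => hp j (Finset.mem_range.mp hj)) h0 hadd

/-- For cyclic `H`, the vacuum is cyclic for the field
polynomials: `closure {QΩ : deg Q ≤ n} ⊇ ⊕_{k≤n} H_{T,k}`. -/
theorem vacuum_cyclic_for_field_polynomials
    {𝓗 𝓕 : Type*}
    [NormedAddCommGroup 𝓗] [InnerProductSpace ℂ 𝓗] [CompleteSpace 𝓗]
    [NormedAddCommGroup 𝓕] [InnerProductSpace ℂ 𝓕] [CompleteSpace 𝓕]
    (V : ℕ → Type*) [∀ k, NormedAddCommGroup (V k)] [∀ k, InnerProductSpace ℂ (V k)]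
    (en : ∀ k, V k →ₗᵢ[ℂ] 𝓕)
    (horth : ∀ j k, j ≠ k → ∀ (v : V j) (w : V k), (inner ℂ (en j v) (en k w) : ℂ) = 0)
    (vac : V 0) (Ω : 𝓕) (hΩ : Ω = en 0 vac)
    (H : Submodule ℝ 𝓗)
    (hcyclic : Dense ((Submodule.span ℂ (H : Set 𝓗) : Submodule ℂ 𝓗) : Set 𝓗))
    (tens : ∀ k, 𝓗 → V k → V (k + 1))
    (htens_cont : ∀ k, Continuous fun p : 𝓗 × V k => tens k p.1 p.2)
    (htens_addl : ∀ k (ξ ξ' : 𝓗) (v : V k), tens k (ξ + ξ') v = tens k ξ v + tens k ξ' v)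
    (htens_addr : ∀ k (ξ : 𝓗) (v v' : V k), tens k ξ (v + v') = tens k ξ v + tens k ξ v')
    (htens_smul : ∀ k (c : ℂ) (ξ : 𝓗) (v : V k),
      tens k (c • ξ) v = c • tens k ξ v ∧ tens k ξ (c • v) = c • tens k ξ v)
    (htotal : ∀ k,
      Dense ((Submodule.span ℂ (elemTens vac tens (Set.univ : Set 𝓗) k) : Submodule ℂ (V k)) : Set (V k)))
    (φ : 𝓗 → 𝓕 → 𝓕)
    (hφ_action : ∀ h ∈ H, ∀ k (v : V k),
      ∃ y ∈ (⨆ j ∈ Finset.range (k + 1), LinearMap.range ((en j).toLinearMap) : Submodule ℂ 𝓕),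
        φ h (en k v) = en (k + 1) (tens k h v) + y)
    (hφ_add : ∀ h ∈ H, ∀ x y : 𝓕, φ h (x + y) = φ h x + φ h y)
    (hφ_smul : ∀ h ∈ H, ∀ (c : ℂ) (x : 𝓕), φ h (c • x) = c • φ h x) :
    ∀ n, ∀ k ≤ n, ∀ v : V k, en k v ∈ closure ((polyVac H φ Ω n : Submodule ℂ 𝓕) : Set 𝓕) := by
  classical
  -- abbreviation for the "particle number < k" subspace
  set L : ℕ → Submodule ℂ 𝓕 :=
    fun k => ⨆ j ∈ Finset.range k, LinearMap.range ((en j).toLinearMap) with hLdef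
  have Lmono : ∀ a b : ℕ, a ≤ b → L a ≤ L b := by
    intro a b hab
    exact iSup₂_le fun i hi => le_iSup₂ (f := fun j (_ : j ∈ Finset.range b) =>
      LinearMap.range ((en j).toLinearMap)) i
      (Finset.mem_range.mpr (lt_of_lt_of_le (Finset.mem_range.mp hi) hab))
  have LmemRange : ∀ j k : ℕ, j < k → LinearMap.range ((en j).toLinearMap) ≤ L k := by
    intro j k hjk
    exact le_iSup₂ (f := fun i (_ : i ∈ Finset.range k) =>
      LinearMap.range ((en i).toLinearMap)) j (Finset.mem_range.mpr hjk)
  -- monotonicity of polyVac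
  have polyMono : ∀ m n : ℕ, m ≤ n → polyVac H φ Ω m ≤ polyVac H φ Ω n := by
    intro m n hmn
    induction n with
    | zero => rw [Nat.le_zero.mp hmn]
    | succ n ihn =>
      rcases Nat.lt_or_ge m (n + 1) with h | h
      · exact le_trans (ihn (Nat.lt_succ_iff.mp h)) le_sup_left
      · rw [le_antisymm hmn h]
  -- φ h kills 0
  have hφ_zero : ∀ h ∈ H, φ h 0 = 0 := by
    intro h hh
    have := hφ_smul h hh 0 0
    simpa using this
  -- φ h maps L k into L (k+1)
  have hS : ∀ h ∈ H, ∀ k, ∀ y ∈ L k, φ h y ∈ L (k + 1) := by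
    intro h hh k y hy
    refine aux_biSup_induction (C := fun t => φ h t ∈ L (k + 1)) _ k hy (fun j hj z hz => ?_) ?_ ?_
    · obtain ⟨u, rfl⟩ := hz
      obtain ⟨y', hy', heq⟩ := hφ_action h hh j u
      have h1 : en (j + 1) (tens j h u) ∈ L (k + 1) :=
        LmemRange (j + 1) (k + 1) (by omega) ⟨tens j h u, rfl⟩
      have h2 : y' ∈ L (k + 1) := Lmono (j + 1) (k + 1) (by omega) hy'
      show φ h ((en j).toLinearMap u) ∈ L (k + 1)
      rw [show ((en j).toLinearMap u : 𝓕) = en j u from rfl, heq]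
      exact add_mem h1 h2
    · show φ h 0 ∈ L (k + 1)
      rw [hφ_zero h hh]; exact zero_mem _
    · intro y z hy' hz'
      show φ h (y + z) ∈ L (k + 1)
      rw [hφ_add h hh]
      exact add_mem hy' hz'
  -- elementary H-tensors: exact membership up to lower particle numbers
  have hR : ∀ k, ∀ w ∈ elemTens vac tens (H : Set 𝓗) k,
      en k w ∈ polyVac H φ Ω k ⊔ L k := by
    intro k
    induction k with
    | zero =>
      intro w hw
      have hw' : w = vac := hw
      subst hw'
      rw [← hΩ]
      exact Submodule.mem_sup_left (Submodule.mem_span_singleton_self Ω)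
    | succ k ih =>
      rintro w ⟨h, hh, v, hv, rfl⟩
      obtain ⟨p, hp, y, hy, hpv⟩ := Submodule.mem_sup.mp (ih v hv)
      obtain ⟨y', hy', heq⟩ := hφ_action h hh k v
      rw [← hpv, hφ_add h hh] at heq
      have key : en (k + 1) (tens k h v) = φ h p + φ h y - y' :=
        eq_sub_of_add_eq heq.symm
      rw [key]
      refine sub_mem (add_mem ?_ ?_) ?_
      · refine Submodule.mem_sup_left ?_
        show φ h p ∈ polyVac H φ Ω (k + 1)
        exact Submodule.mem_sup_right (Submodule.subset_span ⟨h, hh, p, hp, rfl⟩)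
      · exact Submodule.mem_sup_right (hS h hh k y hy)
      · exact Submodule.mem_sup_right hy'
  -- elementary universal tensors lie in the closed span of elementary H-tensors
  have hW : ∀ k, ∀ w ∈ elemTens vac tens (Set.univ : Set 𝓗) k,
      w ∈ closure ((Submodule.span ℂ (elemTens vac tens (H : Set 𝓗) k) : Submodule ℂ (V k)) : Set (V k)) := by
    intro k
    induction k with
    | zero =>
      intro w hw
      have hw' : w = vac := hw
      subst hw'
      exact subset_closure (Submodule.subset_span rfl)
    | succ k ih =>
      rintro w ⟨ξ, -, v, hv, rfl⟩
      set N : Submodule ℂ (V (k + 1)) :=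
        (Submodule.span ℂ (elemTens vac tens (H : Set 𝓗) (k + 1))).topologicalClosure with hNdef
      have hNclosed : IsClosed (N : Set (V (k + 1))) :=
        Submodule.isClosed_topologicalClosure _
      have stepA : ∀ h ∈ H, tens k h v ∈ N := by
        intro h hh
        refine aux_maps_closure
          { toFun := fun v' => tens k h v',
            map_add' := htens_addr k h,
            map_smul' := fun c v' => (htens_smul k c h v').2 }
          ((htens_cont k).comp (Continuous.prodMk continuous_const continuous_id))
          (elemTens vac tens (H : Set 𝓗) k) N hNclosed
          (fun v'' hv'' => Submodule.le_topologicalClosure _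
            (Submodule.subset_span ⟨h, hh, v'', hv'', rfl⟩))
          (ih v hv)
      have stepB : tens k ξ v ∈ N := by
        refine aux_maps_closure
          { toFun := fun ξ' => tens k ξ' v,
            map_add' := fun a b => htens_addl k a b v,
            map_smul' := fun c a => (htens_smul k c a v).1 }
          ((htens_cont k).comp (Continuous.prodMk continuous_id continuous_const))
          (H : Set 𝓗) N hNclosed stepA ?_
        rw [hcyclic.closure_eq]; trivial
      have : tens k ξ v ∈ (N : Set (V (k + 1))) := stepB
      rwa [hNdef, Submodule.topologicalClosure_coe] at this
  -- the span of elementary H-tensors is dense in V k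
  have densH : ∀ k,
      Dense ((Submodule.span ℂ (elemTens vac tens (H : Set 𝓗) k) : Submodule ℂ (V k)) : Set (V k)) := by
    intro k
    have h1 : ((Submodule.span ℂ (elemTens vac tens (Set.univ : Set 𝓗) k) : Submodule ℂ (V k)) : Set (V k))
        ⊆ closure ((Submodule.span ℂ (elemTens vac tens (H : Set 𝓗) k) : Submodule ℂ (V k)) : Set (V k)) := by
      intro x hx
      have hle : Submodule.span ℂ (elemTens vac tens (Set.univ : Set 𝓗) k) ≤
          (Submodule.span ℂ (elemTens vac tens (H : Set 𝓗) k)).topologicalClosure := by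
        refine Submodule.span_le.2 fun w hw => ?_
        have := hW k w hw
        rwa [← Submodule.topologicalClosure_coe] at this
      have := hle hx
      rwa [← Submodule.topologicalClosure_coe]
    exact dense_closure.mp ((htotal k).mono h1)
  -- main induction: each k-particle space lies in the closure of polyVac k
  have T : ∀ n (v : V n), en n v ∈ closure ((polyVac H φ Ω n : Submodule ℂ 𝓕) : Set 𝓕) := by
    intro n
    induction n using Nat.strong_induction_on with
    | _ n ih =>
      have hLsub : L n ≤ (polyVac H φ Ω n).topologicalClosure := by
        refine iSup₂_le fun j hj => ?_
        rintro x ⟨u, rfl⟩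
        have hj' : j < n := Finset.mem_range.mp hj
        have h1 := ih j hj' u
        have h2 : closure ((polyVac H φ Ω j : Submodule ℂ 𝓕) : Set 𝓕)
            ⊆ closure ((polyVac H φ Ω n : Submodule ℂ 𝓕) : Set 𝓕) :=
          closure_mono (SetLike.coe_subset_coe.mpr (polyMono j n hj'.le))
        have h3 : en j u ∈ closure ((polyVac H φ Ω n : Submodule ℂ 𝓕) : Set 𝓕) := h2 h1
        rwa [← Submodule.topologicalClosure_coe] at h3
      have hElem : ∀ w ∈ elemTens vac tens (H : Set 𝓗) n,
          en n w ∈ (polyVac H φ Ω n).topologicalClosure := by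
        intro w hw
        have hsup : polyVac H φ Ω n ⊔ L n ≤ (polyVac H φ Ω n).topologicalClosure :=
          sup_le (Submodule.le_topologicalClosure _) hLsub
        exact hsup (hR n w hw)
      intro v
      have hx : v ∈ closure
          ((Submodule.span ℂ (elemTens vac tens (H : Set 𝓗) n) : Submodule ℂ (V n)) : Set (V n)) := by
        rw [(densH n).closure_eq]; trivial
      have hfin := aux_maps_closure (en n).toLinearMap (en n).continuous
        (elemTens vac tens (H : Set 𝓗) n) ((polyVac H φ Ω n).topologicalClosure)
        (Submodule.isClosed_topologicalClosure _) hElem hx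
      have h' : en n v ∈ (((polyVac H φ Ω n).topologicalClosure : Submodule ℂ 𝓕) : Set 𝓕) := hfin
      rwa [Submodule.topologicalClosure_coe] at h'
  intro n k hk v
  exact closure_mono (SetLike.coe_subset_coe.mpr (polyMono k n hk)) (T k v)
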